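/- For all s, ρ, σ ∈ ℕ there exist positive integers f = f(s,ρ,σ) and g = g(s,ρ,σ) with the following property. Let G be a graph and let (B, 𝒬) be a strong (f,g)-block in G such that B is a stable set and, for every 2-subset {x,y} of B, the interiors of the paths in 𝒬_{x,y} are pairwise anticomplete in G. Then either there is an induced subgraph of G isomorphic to a proper subdivision of K_s, or there is a linear induced K_{ρ,σ}-model in G. -/

import Mathlib

open SimpleGraph

/-- `H` is an induced minor of `G`: there are pairwise disjoint nonempty connected
induced subgraphs `X w` of `G`, one for each vertex `w` of `H`, such that distinct
branch sets are anticomplete iff the corresponding vertices are non-adjacent in `H`. -/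
def IsInducedMinor {V W : Type*} (G : SimpleGraph V) (H : SimpleGraph W) : Prop :=
  ∃ X : W → Set V,
    (∀ w, (X w).Nonempty) ∧
    (∀ w, (G.induce (X w)).Connected) ∧
    (∀ w₁ w₂, w₁ ≠ w₂ → Disjoint (X w₁) (X w₂)) ∧
    (∀ w₁ w₂, w₁ ≠ w₂ →
      ((∀ a ∈ X w₁, ∀ b ∈ X w₂, ¬ G.Adj a b) ↔ ¬ H.Adj w₁ w₂))

/-- The `t`-by-`t` hexagonal grid (wall), in the brick-wall representation. -/
def hexGrid (t : ℕ) : SimpleGraph (Fin t × Fin (2 * t)) :=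
  SimpleGraph.fromRel (fun a b =>
    (a.1 = b.1 ∧ a.2.val + 1 = b.2.val) ∨
    (a.2 = b.2 ∧ a.1.val + 1 = b.1.val ∧ (a.1.val + a.2.val) % 2 = 0))

/-- Membership in the class `𝒞_t` of `{K_{t,t}, W_{t×t}}`-induced-minor-free graphs. -/
def MemCt (t : ℕ) {V : Type*} (G : SimpleGraph V) : Prop :=
  ¬ IsInducedMinor G (completeBipartiteGraph (Fin t) (Fin t)) ∧
  ¬ IsInducedMinor G (hexGrid t)

/-- Membership in `𝒞_t^*`: member of `𝒞_t` with no clique of size `t`. -/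
def MemCtStar (t : ℕ) {V : Type*} (G : SimpleGraph V) : Prop :=
  MemCt t G ∧ G.CliqueFree t

/-- A tree decomposition of `G` with tree `τ` and bags `χ`. -/
def IsTreeDecomp {V T : Type*} (G : SimpleGraph V) (τ : SimpleGraph T)
    (χ : T → Finset V) : Prop :=
  τ.IsTree ∧
  (∀ v : V, ∃ i, v ∈ χ i) ∧
  (∀ u v : V, G.Adj u v → ∃ i, u ∈ χ i ∧ v ∈ χ i) ∧
  (∀ v : V, (τ.induce {i | v ∈ χ i}).Connected)

/-- The treewidth of a finite graph: the least `k` such that `G` admits a tree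
decomposition with all bags of size at most `k + 1`. -/
noncomputable def treewidth {V : Type*} [Fintype V] (G : SimpleGraph V) : ℕ :=
  sInf { k | ∃ (n : ℕ) (τ : SimpleGraph (Fin n)) (χ : Fin n → Finset V),
    IsTreeDecomp G τ χ ∧ ∀ i, (χ i).card ≤ k + 1 }

/-- A walk that is an induced (chordless) path. -/
def IsInducedPathW {V : Type*} (G : SimpleGraph V) {u v : V} (P : G.Walk u v) : Prop :=
  P.IsPath ∧ ∀ a ∈ P.support, ∀ b ∈ P.support, G.Adj a b → s(a, b) ∈ P.edges

/-- The interior of a path: its support minus its two ends. -/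
def interiorW {V : Type*} {G : SimpleGraph V} {u v : V} (P : G.Walk u v) : Set V :=
  {x | x ∈ P.support ∧ x ≠ u ∧ x ≠ v}

/-- `S` separates `a` from `b` in `G`: every walk from `a` to `b` meets `S`. -/
def Separates {V : Type*} (G : SimpleGraph V) (S : Set V) (a b : V) : Prop :=
  ∀ P : G.Walk a b, ∃ x ∈ S, x ∈ P.support

/-- `conn_G(a,b)`: the minimum size of an `a`–`b`-separator. -/
noncomputable def connNum {V : Type*} [Fintype V] (G : SimpleGraph V) (a b : V) : ℕ :=
  sInf { k | ∃ S : Set V, a ∉ S ∧ b ∉ S ∧ Separates G S a b ∧ S.ncard = k }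

/-- `A` and `B` are anticomplete: disjoint, with no edges between them. -/
def Anticomplete {V : Type*} (G : SimpleGraph V) (A B : Set V) : Prop :=
  Disjoint A B ∧ ∀ a ∈ A, ∀ b ∈ B, ¬ G.Adj a b

/-- The graph `G \ M`: delete the vertices of `M` (they become isolated). -/
def delVerts {V : Type*} (G : SimpleGraph V) (M : Set V) : SimpleGraph V where
  Adj a b := G.Adj a b ∧ a ∉ M ∧ b ∉ M
  symm := ⟨fun _ _ h => ⟨h.1.symm, h.2.2, h.2.1⟩⟩
  loopless := ⟨fun a h => G.irrefl h.1⟩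

/-- The set of connected components of `C` in `G`: maximal connected subsets of `C`. -/
def ccSet {V : Type*} (G : SimpleGraph V) (C : Set V) : Set (Set V) :=
  { D | D ⊆ C ∧ D.Nonempty ∧ (G.induce D).Connected ∧
      ∀ D' : Set V, D ⊆ D' → D' ⊆ C → (G.induce D').Connected → D' = D }

/-- `(a,b)` is `s`-wide: there are `s` pairwise internally anticomplete `a`–`b`-paths. -/
def Wide {V : Type*} (G : SimpleGraph V) (s : ℕ) (a b : V) : Prop :=
  ∃ P : Fin s → G.Walk a b,
    (∀ i, IsInducedPathW G (P i)) ∧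
    (∀ i j, i ≠ j → ∀ x ∈ interiorW (P i), ∀ y ∈ interiorW (P j), x ≠ y ∧ ¬ G.Adj x y)

/-- `(a,b)` is an `s`-slim pair: non-adjacent and not `s`-wide. -/
def SlimPair {V : Type*} (G : SimpleGraph V) (s : ℕ) (a b : V) : Prop :=
  a ≠ b ∧ ¬ G.Adj a b ∧ ¬ Wide G s a b

/-- `G` is `(t,s)`-slim: every stable set of size `t` contains an `s`-slim pair. -/
def TSSlim {V : Type*} (G : SimpleGraph V) (t s : ℕ) : Prop :=
  ∀ S : Finset V, S.card = t → (∀ a ∈ S, ∀ b ∈ S, a ≠ b → ¬ G.Adj a b) →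
    ∃ a ∈ S, ∃ b ∈ S, a ≠ b ∧ SlimPair G s a b

/-- `(X,Y,Z,C)` is a `(t,p)`-barrier in `G`. -/
def IsTPBarrier {V : Type*} (G : SimpleGraph V) (t p : ℕ) (X Y Z C : Set V) : Prop :=
  List.Pairwise Disjoint [X, Y, Z, C] ∧
  (∀ x ∈ X, ∀ z ∈ Z, ∀ P : G.Walk x z, IsInducedPathW G P →
    (∀ w ∈ P.support, w ∉ C) →
    ∃ x' ∈ X, ∃ z' ∈ Z, ∃ Q : G.Walk x' z',
      IsInducedPathW G Q ∧ (∀ w ∈ Q.support, w ∉ C) ∧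
      (∀ w ∈ Q.support, w ∈ P.support) ∧ (∀ w ∈ interiorW Q, w ∈ Y)) ∧
  (∀ x ∈ X, ∀ z ∈ Z, ∀ P : G.Walk x z, IsInducedPathW G P →
    (∀ w ∈ P.support, w ∉ C) →
    t ≤ Set.ncard { D ∈ ccSet G C | ∃ c ∈ D, ∃ w ∈ P.support, G.Adj c w }) ∧
  (∀ D ∈ ccSet G C, D.ncard ≤ p)

/-- The barrier `(X,Y,Z,C)` separates `u` from `v` in `G`. -/
def BarSeparates {V : Type*} (G : SimpleGraph V) (X Y Z C : Set V) (u v : V) : Prop :=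
  u ∉ X ∪ Y ∪ Z ∪ C ∧ v ∉ X ∪ Y ∪ Z ∪ C ∧
  Separates G (X ∪ C) u v ∧ Separates G (Z ∪ C) u v

/-- A barrier is reduced: every component of `X ∪ Y ∪ Z` meets both `X` and `Z`. -/
def ReducedBarrier {V : Type*} (G : SimpleGraph V) (X Y Z : Set V) : Prop :=
  ∀ D ∈ ccSet G (X ∪ Y ∪ Z), (D ∩ X).Nonempty ∧ (D ∩ Z).Nonempty

/-- `G` is `(s,t,p,c,f,g)`-slim-barred. -/
def SlimBarred {V : Type*} [Fintype V] (G : SimpleGraph V) (s t p : ℕ)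
    (c f g : ℕ → ℕ) : Prop :=
  ∀ u v : V, SlimPair G s u v →
    ∃ X Y Z C M : Set V,
      List.Pairwise Disjoint [X, Y, Z, C, M] ∧
      (∀ w ∈ X ∪ Y ∪ Z ∪ C ∪ M, w ≠ u ∧ w ≠ v) ∧
      IsTPBarrier (delVerts G M) t p X Y Z C ∧
      BarSeparates (delVerts G M) X Y Z C u v ∧
      Set.ncard (ccSet (delVerts G M) C) ≤ c (Fintype.card V) ∧
      M.ncard ≤ f (Fintype.card V) ∧
      (X ∪ Y ∪ Z).ncard ≤ g (Fintype.card V)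

/-- `(a,b)` is `(x,y,z,p)`-mineable in `G`. -/
def Mineable {V : Type*} (G : SimpleGraph V) (a b : V) (x y z p : ℕ) : Prop :=
  ∃ Ys Xs : Fin x → Set V,
    (∀ i, a ∉ Ys i ∧ b ∉ Ys i) ∧
    (∀ i j, i ≠ j → Anticomplete G (Ys i) (Ys j)) ∧
    (∀ i, (Xs i).Nonempty ∧ a ∉ Xs i ∧ b ∉ Xs i ∧
      Xs i ⊆ {w | w ∉ Ys i ∧ ∃ y' ∈ Ys i, G.Adj y' w}) ∧
    (∀ i, Separates (delVerts G {v | ∃ j, j < i ∧ v ∈ Ys j}) (Ys i ∪ Xs i) a b) ∧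
    (delVerts G {v | ∃ j, v ∈ Ys j}).Reachable a b ∧
    (∀ i, Set.ncard (ccSet G (Ys i)) ≤ y) ∧
    (∀ i, ∀ D ∈ ccSet G (Ys i), D.ncard ≤ p) ∧
    (∀ w : V, Set.ncard {i : Fin x | w ∈ Ys i ∪ Xs i} ≤ z)

/-- Two vertices are twins: same neighbourhoods away from each other. -/
def Twins {V : Type*} (G : SimpleGraph V) (u v : V) : Prop :=
  G.neighborSet u \ {v} = G.neighborSet v \ {u}

/-- A star structure on `G`: an induced star forest with vertex set `C ∪ L`, each
component a star with at least two vertices, with centers `C`, leaves `L`, and each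
leaf `l` attached to the center `ctr l`. -/
structure StarStructure {V : Type*} (G : SimpleGraph V) (C L : Set V)
    (ctr : V → V) : Prop where
  disj : Disjoint C L
  ctrMem : ∀ l ∈ L, ctr l ∈ C ∧ G.Adj (ctr l) l
  hasLeaf : ∀ c ∈ C, ∃ l ∈ L, ctr l = c
  inducedStar : ∀ a ∈ C ∪ L, ∀ b ∈ C ∪ L, G.Adj a b →
    (a ∈ C ∧ b ∈ L ∧ ctr b = a) ∨ (b ∈ C ∧ a ∈ L ∧ ctr a = b)

/-- Centers of the projection `F(G')` of the star forest onto the induced subgraph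
of `G` with vertex set `W`. -/
def projCenters {V : Type*} (C L : Set V) (ctr : V → V) (W : Set V) : Set V :=
  {c | c ∈ C ∧ c ∈ W ∧ ∃ l, l ∈ L ∧ l ∈ W ∧ ctr l = c}

/-- The star of `F(G')` with center `c`. -/
def projStar {V : Type*} (L : Set V) (ctr : V → V) (W : Set V) (c : V) : Set V :=
  insert c {l | l ∈ L ∧ l ∈ W ∧ ctr l = c}

/-- The vertex set of `F(G')`. -/
def projVerts {V : Type*} (C L : Set V) (ctr : V → V) (W : Set V) : Set V :=
  ⋃ c ∈ projCenters C L ctr W, projStar L ctr W c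

/-- `X` is an `F(G')`-based set. -/
def FBasedSet {V : Type*} (C L : Set V) (ctr : V → V) (W X : Set V) : Prop :=
  ∀ c ∈ projCenters C L ctr W,
    (projStar L ctr W c ∩ X).Nonempty → projStar L ctr W c ⊆ X

/-- The `F(G')`-measure of a set `X`: the number of stars of `F(G')` meeting `X` plus
the number of vertices of `X` outside `F(G')`. -/
noncomputable def FMeasure {V : Type*} (C L : Set V) (ctr : V → V) (W X : Set V) : ℕ :=
  Set.ncard {c ∈ projCenters C L ctr W | (projStar L ctr W c ∩ X).Nonempty} +
  Set.ncard (X \ projVerts C L ctr W)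

/-- A tree decomposition of the induced subgraph of `G` with vertex set `W`. -/
def IsTreeDecompOn {V T : Type*} (G : SimpleGraph V) (W : Set V)
    (τ : SimpleGraph T) (χ : T → Finset V) : Prop :=
  τ.IsTree ∧
  (∀ i, (χ i : Set V) ⊆ W) ∧
  (∀ v ∈ W, ∃ i, v ∈ χ i) ∧
  (∀ u ∈ W, ∀ v ∈ W, G.Adj u v → ∃ i, u ∈ χ i ∧ v ∈ χ i) ∧
  (∀ v : V, (τ.induce {i | v ∈ χ i}).Connected)

/-- `G` is `(F,r)`-based: every induced subgraph `G[W]` admits a tree decomposition in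
which every bag is `F(G[W])`-based with `F(G[W])`-measure at most `r`. -/
def FrBased {V : Type*} [Fintype V] (G : SimpleGraph V) (C L : Set V)
    (ctr : V → V) (r : ℕ) : Prop :=
  ∀ W : Set V, ∃ (n : ℕ) (τ : SimpleGraph (Fin n)) (χ : Fin n → Finset V),
    IsTreeDecompOn G W τ χ ∧
    ∀ i, FBasedSet C L ctr W (χ i) ∧ FMeasure C L ctr W (χ i) ≤ r

/-- Every component of `H` is a star or a single vertex. -/
def IsStarForest {W : Type*} (H : SimpleGraph W) : Prop :=
  H.IsAcyclic ∧ ∀ (u v : W) (P : H.Walk u v), P.IsPath → P.length ≤ 2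

/-- `G` has a star coloring with `k` colors. -/
def HasStarColoring {V : Type*} (G : SimpleGraph V) (k : ℕ) : Prop :=
  ∃ f : V → Fin k, (∀ u v, G.Adj u v → f u ≠ f v) ∧
    ∀ i j : Fin k, IsStarForest (G.induce {v | f v = i ∨ f v = j})

/-- `G` contains an induced subgraph isomorphic to a proper subdivision of `K_s`. -/
def InducedProperSubdivisionK {V : Type*} (G : SimpleGraph V) (s : ℕ) : Prop :=
  ∃ (v : Fin s → V) (P : ∀ i j : Fin s, G.Walk (v i) (v j)),
    Function.Injective v ∧
    (∀ i j, i ≠ j → ¬ G.Adj (v i) (v j)) ∧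
    (∀ i j, i < j → IsInducedPathW G (P i j) ∧ (interiorW (P i j)).Nonempty) ∧
    (∀ i j k l, i < j → k < l → (i, j) ≠ (k, l) →
      ∀ x ∈ interiorW (P i j), ∀ y ∈ interiorW (P k l), x ≠ y ∧ ¬ G.Adj x y) ∧
    (∀ i j k, i < j → k ≠ i → k ≠ j →
      ∀ x ∈ interiorW (P i j), x ≠ v k ∧ ¬ G.Adj x (v k))

/-- `S` is the vertex set of an induced path of `G`. -/
def IsPathSet {V : Type*} (G : SimpleGraph V) (S : Set V) : Prop :=
  ∃ (u v : V) (P : G.Walk u v), IsInducedPathW G P ∧ S = {x | x ∈ P.support}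

/-- A linear induced `H`-model in `G`: an induced `H`-model all of whose branch sets
are paths. -/
def LinearInducedModel {V W : Type*} (G : SimpleGraph V) (H : SimpleGraph W) : Prop :=
  ∃ X : W → Set V,
    (∀ w, IsPathSet G (X w)) ∧
    (∀ w, (X w).Nonempty) ∧
    (∀ w₁ w₂, w₁ ≠ w₂ → Disjoint (X w₁) (X w₂)) ∧
    (∀ w₁ w₂, w₁ ≠ w₂ →
      ((∀ a ∈ X w₁, ∀ b ∈ X w₂, ¬ G.Adj a b) ↔ ¬ H.Adj w₁ w₂))

namespace Stmt10

variable {V : Type} {G : SimpleGraph V}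

def ConflV {x y : V} (P : G.Walk x y) (z : V) : Prop :=
  z ∈ interiorW P ∨ ∃ w ∈ interiorW P, G.Adj z w

def ConflP {x y x' y' : V} (P : G.Walk x y) (P' : G.Walk x' y') : Prop :=
  ∃ a ∈ interiorW P, ∃ b ∈ interiorW P', G.Adj a b

lemma conflP_symm {x y x' y' : V} {P : G.Walk x y} {P' : G.Walk x' y'}
    (h : ConflP P P') : ConflP P' P := by
  obtain ⟨a, ha, b, hb, hab⟩ := h
  exact ⟨b, hb, a, ha, hab.symm⟩

lemma exists_decomp {u v : V} (P : G.Walk u v) (hP : P.IsPath) (huv : u ≠ v)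
    (hadj : ¬ G.Adj u v) :
    ∃ (a b : V) (h1 : G.Adj u a) (I : G.Walk a b) (h2 : G.Adj b v),
      P = Walk.cons h1 (I.concat h2) := by
  obtain ⟨a, h1, p, rfl⟩ := Walk.exists_eq_cons_of_ne huv P
  cases p with
  | nil => exact absurd h1 hadj
  | cons h2 p2 =>
      obtain ⟨b, I, h', hc⟩ := Walk.exists_cons_eq_concat h2 p2
      exact ⟨a, b, h1, I, h', by rw [hc]⟩

lemma interior_facts {u v : V} (P : G.Walk u v) (hP : IsInducedPathW G P) (huv : u ≠ v)
    (hadj : ¬ G.Adj u v) :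
    IsPathSet G (interiorW P) ∧ (interiorW P).Nonempty := by
  obtain ⟨a, b, h1, I, h2, rfl⟩ := exists_decomp P hP.1 huv hadj
  have hsup : (Walk.cons h1 (I.concat h2)).support = u :: (I.support ++ [v]) := by
    simp [Walk.support_concat, List.concat_eq_append]
  have hnd : (u :: (I.support ++ [v])).Nodup := by
    rw [← hsup]; exact (Walk.isPath_def _).1 hP.1
  rw [List.nodup_cons, List.nodup_append] at hnd
  have hu : u ∉ I.support := fun h => hnd.1 (List.mem_append_left _ h)
  have hv : v ∉ I.support := by
    intro h
    exact hnd.2.2.2 v h v (List.mem_singleton_self v) rfl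
  have hint : interiorW (Walk.cons h1 (I.concat h2)) = {x | x ∈ I.support} := by
    ext x
    simp only [interiorW, Set.mem_setOf_eq, hsup, List.mem_cons, List.mem_append,
      List.not_mem_nil, or_false]
    constructor
    · rintro ⟨(rfl | h | rfl), hx1, hx2⟩
      · exact absurd rfl hx1
      · exact h
      · exact absurd rfl hx2
    · intro h
      exact ⟨Or.inr (Or.inl h), fun hh => hu (hh ▸ h), fun hh => hv (hh ▸ h)⟩
  have hedges : (Walk.cons h1 (I.concat h2)).edges = s(u, a) :: (I.edges ++ [s(b, v)]) := by
    simp [Walk.edges_concat, List.concat_eq_append]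
  constructor
  · refine ⟨a, b, I, ⟨(Walk.isPath_def _).2 hnd.2.1, ?_⟩, hint⟩
    intro x hx y hy hxy
    have hmem : s(x, y) ∈ (Walk.cons h1 (I.concat h2)).edges := by
      apply hP.2 <;> [skip; skip; exact hxy] <;> rw [hsup] <;>
        simp only [List.mem_cons, List.mem_append, List.not_mem_nil, or_false]
      · exact Or.inr (Or.inl hx)
      · exact Or.inr (Or.inl hy)
    rw [hedges] at hmem
    simp only [List.mem_cons, List.mem_append, List.not_mem_nil, or_false] at hmem
    rcases hmem with h | h | h
    · rw [Sym2.eq_iff] at h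
      rcases h with ⟨rfl, rfl⟩ | ⟨rfl, rfl⟩
      · exact absurd hx hu
      · exact absurd hy hu
    · exact h
    · rw [Sym2.eq_iff] at h
      rcases h with ⟨rfl, rfl⟩ | ⟨rfl, rfl⟩
      · exact absurd hy hv
      · exact absurd hx hv
  · rw [hint]
    exact ⟨a, I.start_mem_support⟩

lemma singleton_pathSet (z : V) : IsPathSet G ({z} : Set V) := by
  refine ⟨z, z, Walk.nil, ⟨Walk.IsPath.nil, ?_⟩, by ext x; simp⟩
  intro a ha b hb hab
  simp only [Walk.support_nil, List.mem_singleton] at ha hb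
  subst ha; subst hb
  exact absurd hab G.irrefl

lemma not_mem_interior_left {u v : V} (P : G.Walk u v) : u ∉ interiorW P :=
  fun h => h.2.1 rfl

lemma not_mem_interior_right {u v : V} (P : G.Walk u v) : v ∉ interiorW P :=
  fun h => h.2.2 rfl

end Stmt10


namespace Stmt10

attribute [local instance] Classical.propDecidable

variable {V : Type} {G : SimpleGraph V}

lemma buildModel {ρ σ : ℕ} (L : Fin ρ → Set V) (R : Fin σ → Set V)
    (hLpath : ∀ i, IsPathSet G (L i)) (hRpath : ∀ j, IsPathSet G (R j))
    (hLne : ∀ i, (L i).Nonempty) (hRne : ∀ j, (R j).Nonempty)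
    (hLL : ∀ i j, i ≠ j → ∀ a ∈ L i, ∀ b ∈ L j, a ≠ b ∧ ¬ G.Adj a b)
    (hRR : ∀ i j, i ≠ j → ∀ a ∈ R i, ∀ b ∈ R j, a ≠ b ∧ ¬ G.Adj a b)
    (hLRdisj : ∀ i j, ∀ a ∈ L i, ∀ b ∈ R j, a ≠ b)
    (hLRadj : ∀ i j, ∃ a ∈ L i, ∃ b ∈ R j, G.Adj a b) :
    LinearInducedModel G (completeBipartiteGraph (Fin ρ) (Fin σ)) := by
  refine ⟨Sum.elim L R, ?_, ?_, ?_, ?_⟩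
  · rintro (i | j)
    · exact hLpath i
    · exact hRpath j
  · rintro (i | j)
    · exact hLne i
    · exact hRne j
  · rintro (i | i) (j | j) hne
    · refine Set.disjoint_left.2 fun a hai haj => ?_
      exact (hLL i j (fun h => hne (by rw [h])) a hai a haj).1 rfl
    · exact Set.disjoint_left.2 fun a hai haj => hLRdisj i j a hai a haj rfl
    · exact Set.disjoint_left.2 fun a hai haj => hLRdisj j i a haj a hai rfl
    · refine Set.disjoint_left.2 fun a hai haj => ?_
      exact (hRR i j (fun h => hne (by rw [h])) a hai a haj).1 rfl
  · rintro (i | i) (j | j) hne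
    · simp only [completeBipartiteGraph_adj, Sum.elim_inl]
      constructor
      · intro _; simp
      · intro _ a ha b hb
        exact (hLL i j (fun h => hne (by rw [h])) a ha b hb).2
    · simp only [completeBipartiteGraph_adj, Sum.elim_inl, Sum.elim_inr]
      constructor
      · intro h
        obtain ⟨a, ha, b, hb, hab⟩ := hLRadj i j
        exact absurd hab (h a ha b hb)
      · intro h; simp at h
    · simp only [completeBipartiteGraph_adj, Sum.elim_inl, Sum.elim_inr]
      constructor
      · intro h
        obtain ⟨a, ha, b, hb, hab⟩ := hLRadj j i
        exact absurd hab.symm (h b hb a ha)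
      · intro h; simp at h
    · simp only [completeBipartiteGraph_adj, Sum.elim_inr]
      constructor
      · intro _; simp
      · intro _ a ha b hb
        exact (hRR i j (fun h => hne (by rw [h])) a ha b hb).2

lemma pigeon {α β : Type*} {A : Finset α} {T : Finset β} {ρ σ : ℕ}
    (φ : α → Finset β) (hφ : ∀ a ∈ A, φ a ∈ T.powersetCard ρ)
    (hA : T.card.choose ρ * (σ - 1) < A.card) :
    ∃ R ∈ T.powersetCard ρ, ∃ Z ⊆ A, Z.card = σ ∧ ∀ a ∈ Z, φ a = R := by
  classical
  obtain ⟨R, hR, hlt⟩ := Finset.exists_lt_card_fiber_of_mul_lt_card_of_maps_to hφ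
    (by rwa [Finset.card_powersetCard])
  obtain ⟨Z, hZsub, hZcard⟩ := Finset.exists_subset_card_eq
    (show σ ≤ (A.filter fun x => φ x = R).card by omega)
  refine ⟨R, hR, Z, fun z hz => (Finset.mem_filter.1 (hZsub hz)).1, hZcard,
    fun a ha => (Finset.mem_filter.1 (hZsub ha)).2⟩

end Stmt10

namespace Stmt10

attribute [local instance] Classical.propDecidable

variable {V : Type} {G : SimpleGraph V}

/-- index a finset of known card by `Fin` -/
noncomputable def finIdx {α : Type*} {F : Finset α} {n : ℕ} (h : F.card = n) : Fin n → α :=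
  fun i => ((Finset.equivFinOfCardEq h).symm i : α)

lemma finIdx_mem {α : Type*} {F : Finset α} {n : ℕ} (h : F.card = n) (i : Fin n) :
    finIdx h i ∈ F := ((Finset.equivFinOfCardEq h).symm i).2

lemma finIdx_inj {α : Type*} {F : Finset α} {n : ℕ} (h : F.card = n) {i j : Fin n}
    (hij : i ≠ j) : finIdx h i ≠ finIdx h j := by
  intro hc
  exact hij ((Equiv.injective _) (Subtype.coe_injective hc))

lemma win1 {x y : V} {ρ σ : ℕ} (hxy : x ≠ y) (hnadj : ¬ G.Adj x y)
    (F : Finset (G.Walk x y))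
    (hind : ∀ P ∈ F, IsInducedPathW G P)
    (hanti : ∀ P ∈ F, ∀ Q ∈ F, P ≠ Q → ∀ u ∈ interiorW P, ∀ w ∈ interiorW Q,
      u ≠ w ∧ ¬ G.Adj u w)
    (Z : Finset V)
    (hZx : ∀ z ∈ Z, z ≠ x ∧ z ≠ y)
    (hZstab : ∀ a ∈ Z, ∀ b ∈ Z, a ≠ b → ¬ G.Adj a b)
    (hheavy : ∀ z ∈ Z, ρ + 1 ≤ (F.filter (fun P => ConflV P z)).card)
    (hZcard : F.card.choose ρ * (σ - 1) < Z.card) :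
    LinearInducedModel G (completeBipartiteGraph (Fin ρ) (Fin σ)) := by
  -- pure conflict sets have size ≥ ρ
  have hpure : ∀ z ∈ Z, ∃ t ∈ F.powersetCard ρ,
      ∀ P ∈ t, z ∉ interiorW P ∧ ∃ w ∈ interiorW P, G.Adj z w := by
    intro z hz
    set pure := F.filter (fun P => z ∉ interiorW P ∧ ∃ w ∈ interiorW P, G.Adj z w) with hp
    have hmemb : (F.filter (fun P => z ∈ interiorW P)).card ≤ 1 := by
      refine Finset.card_le_one.2 fun P hP Q hQ => ?_
      rw [Finset.mem_filter] at hP hQ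
      by_contra hne
      exact (hanti P hP.1 Q hQ.1 hne z hP.2 z hQ.2).1 rfl
    have hsub : F.filter (fun P => ConflV P z) ⊆
        (F.filter (fun P => z ∈ interiorW P)) ∪ pure := by
      intro P hP
      rw [Finset.mem_filter] at hP
      by_cases hm : z ∈ interiorW P
      · exact Finset.mem_union_left _ (Finset.mem_filter.2 ⟨hP.1, hm⟩)
      · rcases hP.2 with h | h
        · exact absurd h hm
        · exact Finset.mem_union_right _ (Finset.mem_filter.2 ⟨hP.1, hm, h⟩)
    have hcard : ρ ≤ pure.card := by
      have h1 := hheavy z hz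
      have h2 := (Finset.card_le_card hsub).trans (Finset.card_union_le _ _)
      omega
    obtain ⟨t, ht, htc⟩ := Finset.exists_subset_card_eq hcard
    refine ⟨t, Finset.mem_powersetCard.2 ⟨ht.trans (Finset.filter_subset _ _), htc⟩, ?_⟩
    intro P hP
    exact (Finset.mem_filter.1 (ht hP)).2
  choose! φ hφ1 hφ2 using hpure
  obtain ⟨R, hR, Zs, hZsub, hZscard, hZR⟩ := pigeon φ hφ1 hZcard
  obtain ⟨hRF, hRcard⟩ := Finset.mem_powersetCard.1 hR
  -- now build the model
  have hWalkind : ∀ P ∈ F, IsPathSet G (interiorW P) ∧ (interiorW P).Nonempty :=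
    fun P hP => interior_facts P (hind P hP) hxy hnadj
  refine buildModel (fun i => interiorW (finIdx hRcard i)) (fun j => {finIdx hZscard j})
    (fun i => (hWalkind _ (hRF (finIdx_mem hRcard i))).1)
    (fun j => singleton_pathSet _)
    (fun i => (hWalkind _ (hRF (finIdx_mem hRcard i))).2)
    (fun j => ⟨_, rfl⟩) ?_ ?_ ?_ ?_
  · intro i j hij a ha b hb
    exact hanti _ (hRF (finIdx_mem hRcard i)) _ (hRF (finIdx_mem hRcard j))
      (finIdx_inj hRcard hij) a ha b hb
  · intro i j hij a ha b hb
    rw [Set.mem_singleton_iff] at ha hb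
    subst ha; subst hb
    have hne : finIdx hZscard i ≠ finIdx hZscard j := finIdx_inj hZscard hij
    exact ⟨hne, hZstab _ (hZsub (finIdx_mem hZscard i)) _ (hZsub (finIdx_mem hZscard j)) hne⟩
  · intro i j a ha b hb
    rw [Set.mem_singleton_iff] at hb
    subst hb
    intro hc
    have hz := hZsub (finIdx_mem hZscard j)
    have := hφ2 _ hz _ (by rw [hZR _ (finIdx_mem hZscard j)]; exact finIdx_mem hRcard i)
    exact this.1 (hc ▸ ha)
  · intro i j
    have hz := hZsub (finIdx_mem hZscard j)
    have := hφ2 _ hz _ (by rw [hZR _ (finIdx_mem hZscard j)]; exact finIdx_mem hRcard i)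
    obtain ⟨w, hw, hadj⟩ := this.2
    exact ⟨w, hw, _, rfl, hadj.symm⟩

lemma win2 {x y x' y' : V} {ρ σ : ℕ} (hxy : x ≠ y) (hnadj : ¬ G.Adj x y)
    (hxy' : x' ≠ y') (hnadj' : ¬ G.Adj x' y')
    (F : Finset (G.Walk x y)) (F' : Finset (G.Walk x' y'))
    (hind : ∀ P ∈ F, IsInducedPathW G P) (hind' : ∀ P ∈ F', IsInducedPathW G P)
    (hanti : ∀ P ∈ F, ∀ Q ∈ F, P ≠ Q → ∀ u ∈ interiorW P, ∀ w ∈ interiorW Q,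
      u ≠ w ∧ ¬ G.Adj u w)
    (hanti' : ∀ P ∈ F', ∀ Q ∈ F', P ≠ Q → ∀ u ∈ interiorW P, ∀ w ∈ interiorW Q,
      u ≠ w ∧ ¬ G.Adj u w)
    (hcross : ∀ P ∈ F, ∀ P' ∈ F', ∀ u ∈ interiorW P, u ∉ interiorW P')
    (H : Finset (G.Walk x' y')) (hHF : H ⊆ F')
    (hheavy : ∀ P' ∈ H, ρ ≤ (F.filter (fun Q => ConflP Q P')).card)
    (hHcard : F.card.choose ρ * (σ - 1) < H.card) :
    LinearInducedModel G (completeBipartiteGraph (Fin ρ) (Fin σ)) := by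
  have hpure : ∀ P' ∈ H, ∃ t ∈ F.powersetCard ρ, ∀ P ∈ t, ConflP P P' := by
    intro P' hP'
    obtain ⟨t, ht, htc⟩ := Finset.exists_subset_card_eq (hheavy P' hP')
    exact ⟨t, Finset.mem_powersetCard.2 ⟨ht.trans (Finset.filter_subset _ _), htc⟩,
      fun P hP => (Finset.mem_filter.1 (ht hP)).2⟩
  choose! φ hφ1 hφ2 using hpure
  obtain ⟨R, hR, Zs, hZsub, hZscard, hZR⟩ := pigeon φ hφ1 hHcard
  obtain ⟨hRF, hRcard⟩ := Finset.mem_powersetCard.1 hR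
  have hWalkind : ∀ P ∈ F, IsPathSet G (interiorW P) ∧ (interiorW P).Nonempty :=
    fun P hP => interior_facts P (hind P hP) hxy hnadj
  have hWalkind' : ∀ P ∈ F', IsPathSet G (interiorW P) ∧ (interiorW P).Nonempty :=
    fun P hP => interior_facts P (hind' P hP) hxy' hnadj'
  refine buildModel (fun i => interiorW (finIdx hRcard i))
    (fun j => interiorW (finIdx hZscard j))
    (fun i => (hWalkind _ (hRF (finIdx_mem hRcard i))).1)
    (fun j => (hWalkind' _ (hHF (hZsub (finIdx_mem hZscard j)))).1)
    (fun i => (hWalkind _ (hRF (finIdx_mem hRcard i))).2)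
    (fun j => (hWalkind' _ (hHF (hZsub (finIdx_mem hZscard j)))).2) ?_ ?_ ?_ ?_
  · intro i j hij a ha b hb
    exact hanti _ (hRF (finIdx_mem hRcard i)) _ (hRF (finIdx_mem hRcard j))
      (finIdx_inj hRcard hij) a ha b hb
  · intro i j hij a ha b hb
    exact hanti' _ (hHF (hZsub (finIdx_mem hZscard i))) _ (hHF (hZsub (finIdx_mem hZscard j)))
      (finIdx_inj hZscard hij) a ha b hb
  · intro i j a ha b hb hc
    exact hcross _ (hRF (finIdx_mem hRcard i)) _ (hHF (hZsub (finIdx_mem hZscard j)))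
      a ha (hc ▸ hb)
  · intro i j
    have hz := hZsub (finIdx_mem hZscard j)
    have hconf : ConflP (finIdx hRcard i) (finIdx hZscard j) :=
      hφ2 _ hz _ (by rw [hZR _ (finIdx_mem hZscard j)]; exact finIdx_mem hRcard i)
    obtain ⟨a, ha, b, hb, hab⟩ := hconf
    exact ⟨a, ha, b, hb, hab⟩

end Stmt10

namespace Stmt10

attribute [local instance] Classical.propDecidable

set_option maxHeartbeats 1000000 in
lemma select_S {V : Type} [LinearOrder V] (B : Finset V) (s h : ℕ) (hh : 1 ≤ h)
    (Bad : V → V → Finset V)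
    (hcard : ∀ x ∈ B, ∀ y ∈ B, x < y → (Bad x y).card < h)
    (hB : (h + 1) * (s + 1) ^ 6 ≤ B.card) :
    ∃ S, S ⊆ B ∧ S.card = s ∧
      ∀ x ∈ S, ∀ y ∈ S, ∀ z ∈ S, x < y → z ≠ x → z ≠ y → z ∉ Bad x y := by
  have hsB : s ≤ B.card := by
    refine le_trans ?_ hB
    calc s ≤ (s + 1) ^ 6 := le_trans (Nat.le_succ s) (Nat.le_self_pow (by norm_num) _)
      _ ≤ (h + 1) * (s + 1) ^ 6 := Nat.le_mul_of_pos_left _ (by omega)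
  by_cases hs : s ≤ 2
  · obtain ⟨S, hSB, hScard⟩ := Finset.exists_subset_card_eq hsB
    refine ⟨S, hSB, hScard, ?_⟩
    intro x hx y hy z hz hxy hzx hzy _
    have hsub : ({z, x, y} : Finset V) ⊆ S := by
      intro w hw
      simp only [Finset.mem_insert, Finset.mem_singleton] at hw
      rcases hw with rfl | rfl | rfl <;> assumption
    have h3 : ({z, x, y} : Finset V).card = 3 := by
      rw [Finset.card_insert_of_notMem (by simp [hzx, hzy]),
        Finset.card_insert_of_notMem (by simp [ne_of_lt hxy]), Finset.card_singleton]
    have := Finset.card_le_card hsub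
    omega
  · push_neg at hs
    set F := B.card with hF
    set P2 : Finset (V × V) := (B ×ˢ B).filter (fun p => p.1 < p.2) with hP2
    set T : Finset (Finset V) :=
      P2.biUnion (fun p => ((Bad p.1 p.2 ∩ B) \ {p.1, p.2}).image
        (fun z => insert z {p.1, p.2})) with hT
    have hT3 : ∀ t ∈ T, t ⊆ B ∧ t.card = 3 := by
      intro t ht
      rw [hT, Finset.mem_biUnion] at ht
      obtain ⟨p, hp, ht⟩ := ht
      rw [Finset.mem_image] at ht
      obtain ⟨z, hz, rfl⟩ := ht
      rw [hP2, Finset.mem_filter, Finset.mem_product] at hp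
      rw [Finset.mem_sdiff, Finset.mem_inter] at hz
      constructor
      · intro w hw
        simp only [Finset.mem_insert, Finset.mem_singleton] at hw
        rcases hw with rfl | rfl | rfl
        · exact hz.1.2
        · exact hp.1.1
        · exact hp.1.2
      · have hz12 : z ≠ p.1 ∧ z ≠ p.2 := by
          constructor <;> intro hc <;> subst hc <;> simp at hz
        rw [Finset.card_insert_of_notMem (by simp [hz12.1, hz12.2]),
          Finset.card_insert_of_notMem (by simp [ne_of_lt hp.2]), Finset.card_singleton]
    have hTcard : T.card ≤ F * F * h := by
      calc T.card ≤ ∑ p ∈ P2, (((Bad p.1 p.2 ∩ B) \ {p.1, p.2}).image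
            (fun z => insert z {p.1, p.2})).card := Finset.card_biUnion_le
        _ ≤ ∑ _p ∈ P2, h := by
            refine Finset.sum_le_sum fun p hp => ?_
            rw [hP2, Finset.mem_filter, Finset.mem_product] at hp
            calc (((Bad p.1 p.2 ∩ B) \ {p.1, p.2}).image (fun z => insert z {p.1, p.2})).card
                ≤ ((Bad p.1 p.2 ∩ B) \ {p.1, p.2}).card := Finset.card_image_le
              _ ≤ (Bad p.1 p.2).card := Finset.card_le_card
                  ((Finset.sdiff_subset).trans Finset.inter_subset_left)
              _ ≤ h := le_of_lt (hcard _ hp.1.1 _ hp.1.2 hp.2)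
        _ = P2.card * h := by rw [Finset.sum_const, smul_eq_mul]
        _ ≤ (F * F) * h := by
            refine Nat.mul_le_mul_right h ?_
            calc P2.card ≤ (B ×ˢ B).card := Finset.card_filter_le _ _
              _ = F * F := by rw [Finset.card_product]
    set BadS := (B.powersetCard s).filter (fun S => ∃ t ∈ T, t ⊆ S) with hBadS
    have hcount : ∀ t ∈ T, ((B.powersetCard s).filter (fun S => t ⊆ S)).card
        ≤ F.choose (s - 3) := by
      intro t ht
      have h3 := hT3 t ht
      have : ((B.powersetCard s).filter (fun S => t ⊆ S)).card
          ≤ (B.powersetCard (s - 3)).card := by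
        refine Finset.card_le_card_of_injOn (fun S => S \ t) ?_ ?_
        · intro S hS
          rw [Finset.mem_coe, Finset.mem_filter, Finset.mem_powersetCard] at hS
          rw [Finset.mem_coe, Finset.mem_powersetCard]
          exact ⟨(Finset.sdiff_subset).trans hS.1.1,
            by rw [Finset.card_sdiff_of_subset hS.2, hS.1.2, h3.2]⟩
        · intro S1 hS1 S2 hS2 hEq
          simp only [Finset.coe_filter, Set.mem_setOf_eq] at hS1 hS2
          have hEq' : S1 \ t = S2 \ t := hEq
          have e1 := Finset.sdiff_union_of_subset hS1.2
          have e2 := Finset.sdiff_union_of_subset hS2.2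
          rw [← e1, ← e2, hEq']
      rwa [Finset.card_powersetCard] at this
    have hBadScard : BadS.card ≤ T.card * F.choose (s - 3) := by
      have hsub : BadS ⊆ T.biUnion (fun t => (B.powersetCard s).filter (fun S => t ⊆ S)) := by
        intro S hS
        rw [hBadS, Finset.mem_filter] at hS
        obtain ⟨t, ht, hts⟩ := hS.2
        exact Finset.mem_biUnion.2 ⟨t, ht, Finset.mem_filter.2 ⟨hS.1, hts⟩⟩
      calc BadS.card ≤ _ := Finset.card_le_card hsub
        _ ≤ ∑ t ∈ T, ((B.powersetCard s).filter (fun S => t ⊆ S)).card :=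
            Finset.card_biUnion_le
        _ ≤ ∑ _t ∈ T, F.choose (s - 3) := Finset.sum_le_sum hcount
        _ = T.card * F.choose (s - 3) := by rw [Finset.sum_const, smul_eq_mul]
    -- arithmetic: BadS.card < choose F s
    have hFs : s ≤ F := hsB
    have hkey : T.card * F.choose (s - 3) < F.choose s := by
      set k := s - 3 with hk
      have hs3 : s = k + 3 := by omega
      have c1 := Nat.choose_succ_right_eq F k
      have c2 := Nat.choose_succ_right_eq F (k + 1)
      have c3 := Nat.choose_succ_right_eq F (k + 2)
      have hidentity : F.choose s * ((k + 1) * (k + 2) * (k + 3))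
          = F.choose k * ((F - k) * (F - (k + 1)) * (F - (k + 2))) := by
        rw [hs3]
        calc F.choose (k + 3) * ((k + 1) * (k + 2) * (k + 3))
            = F.choose (k + 3) * (k + 3) * (k + 2) * (k + 1) := by ring
          _ = F.choose (k + 2) * (F - (k + 2)) * (k + 2) * (k + 1) := by rw [c3]
          _ = (F.choose (k + 2) * (k + 2)) * (F - (k + 2)) * (k + 1) := by ring
          _ = (F.choose (k + 1) * (F - (k + 1))) * (F - (k + 2)) * (k + 1) := by rw [c2]
          _ = (F.choose (k + 1) * (k + 1)) * (F - (k + 1)) * (F - (k + 2)) := by ring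
          _ = (F.choose k * (F - k)) * (F - (k + 1)) * (F - (k + 2)) := by rw [c1]
          _ = F.choose k * ((F - k) * (F - (k + 1)) * (F - (k + 2))) := by ring
      -- numeric core
      have hnum : T.card * ((k + 1) * (k + 2) * (k + 3))
          < (F - k) * (F - (k + 1)) * (F - (k + 2)) := by
        have hb1 : (s + 1) ^ 2 ≥ 4 * s := by nlinarith
        have hb2 : (s + 1) ^ 6 ≥ 64 * s ^ 3 := by
          calc (s + 1) ^ 6 = ((s + 1) ^ 2) ^ 3 := by ring
            _ ≥ (4 * s) ^ 3 := Nat.pow_le_pow_left hb1 3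
            _ = 64 * s ^ 3 := by ring
        have hFbig : F ≥ (h + 1) * (64 * s ^ 3) :=
          le_trans (Nat.mul_le_mul_left (h + 1) hb2) hB
        have hs3pos : 0 < s ^ 3 := by positivity
        have hhs3 : 0 < h * s ^ 3 := Nat.mul_pos (by omega) hs3pos
        have hF64 : F ≥ 64 * (h * s ^ 3) + 64 * s ^ 3 := by
          have e : (h + 1) * (64 * s ^ 3) = 64 * (h * s ^ 3) + 64 * s ^ 3 := by ring
          rw [← e]; exact hFbig
        have hF8 : 8 * h * s ^ 3 < F := by
          have e2 : 8 * h * s ^ 3 = 8 * (h * s ^ 3) := by ring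
          rw [e2]
          linarith
        have hF2s : 2 * (F - s + 1) ≥ F := by
          have hss : s ≤ s ^ 3 := Nat.le_self_pow (by norm_num) s
          have h2s : 2 * s ≤ 64 * s ^ 3 := by
            calc 2 * s ≤ 2 * s ^ 3 := Nat.mul_le_mul_left 2 hss
              _ ≤ 64 * s ^ 3 := Nat.mul_le_mul_right _ (by norm_num)
          have hFge : F ≥ 2 * s := by linarith
          omega
        have hcube : 8 * (F - s + 1) ^ 3 ≥ F ^ 3 := by
          calc 8 * (F - s + 1) ^ 3 = (2 * (F - s + 1)) ^ 3 := by ring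
            _ ≥ F ^ 3 := Nat.pow_le_pow_left hF2s 3
        have hmain : F * F * h * s ^ 3 < (F - s + 1) ^ 3 := by
          have h1 : F ^ 3 > 8 * (F * F * h * s ^ 3) := by
            have hFpos : 0 < F := by omega
            have hFFpos : 0 < F * F := Nat.mul_pos hFpos hFpos
            calc F ^ 3 = F * F * F := by ring
              _ > F * F * (8 * h * s ^ 3) := mul_lt_mul_of_pos_left hF8 hFFpos
              _ = 8 * (F * F * h * s ^ 3) := by ring
          linarith [hcube, h1]
        calc T.card * ((k + 1) * (k + 2) * (k + 3))
            ≤ (F * F * h) * (s * s * s) := by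
              refine Nat.mul_le_mul hTcard ?_
              have : k + 3 ≤ s := by omega
              refine Nat.mul_le_mul (Nat.mul_le_mul (by omega) (by omega)) (by omega)
          _ = F * F * h * s ^ 3 := by ring
          _ < (F - s + 1) ^ 3 := hmain
          _ ≤ (F - k) * (F - (k + 1)) * (F - (k + 2)) := by
              have e1 : F - s + 1 ≤ F - k := by omega
              have e2 : F - s + 1 ≤ F - (k + 1) := by omega
              have e3 : F - s + 1 ≤ F - (k + 2) := by omega
              calc (F - s + 1) ^ 3 = (F - s + 1) * (F - s + 1) * (F - s + 1) := by ring
                _ ≤ (F - k) * (F - (k + 1)) * (F - (k + 2)) :=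
                    Nat.mul_le_mul (Nat.mul_le_mul e1 e2) e3
      have hCpos : 0 < F.choose k := Nat.choose_pos (by omega)
      have hposfac : 0 < (k + 1) * (k + 2) * (k + 3) := by positivity
      -- multiply through
      by_contra hcon
      push_neg at hcon
      have hstep : F.choose k * ((F - k) * (F - (k + 1)) * (F - (k + 2)))
          ≤ T.card * F.choose k * ((k + 1) * (k + 2) * (k + 3)) := by
        rw [← hidentity]
        exact Nat.mul_le_mul_right _ hcon
      have hlt : F.choose k * (T.card * ((k + 1) * (k + 2) * (k + 3)))
          < F.choose k * ((F - k) * (F - (k + 1)) * (F - (k + 2))) :=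
        mul_lt_mul_of_pos_left hnum hCpos
      have heq2 : T.card * F.choose k * ((k + 1) * (k + 2) * (k + 3))
          = F.choose k * (T.card * ((k + 1) * (k + 2) * (k + 3))) := by ring
      rw [heq2] at hstep
      exact lt_irrefl _ (lt_of_lt_of_le hlt hstep)
    have hexists : ∃ S ∈ B.powersetCard s, S ∉ BadS := by
      by_contra hc
      push_neg at hc
      have hsub : B.powersetCard s ⊆ BadS := fun S hS => hc S hS
      have h1 := Finset.card_le_card hsub
      rw [Finset.card_powersetCard] at h1
      exact absurd (le_trans h1 hBadScard) (not_le.2 hkey)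
    obtain ⟨S, hS, hSgood⟩ := hexists
    rw [Finset.mem_powersetCard] at hS
    refine ⟨S, hS.1, hS.2, ?_⟩
    intro x hx y hy z hz hxy hzx hzy hbad
    apply hSgood
    rw [hBadS, Finset.mem_filter]
    refine ⟨Finset.mem_powersetCard.2 hS, insert z {x, y}, ?_, ?_⟩
    · rw [hT, Finset.mem_biUnion]
      refine ⟨(x, y), ?_, ?_⟩
      · rw [hP2, Finset.mem_filter, Finset.mem_product]
        exact ⟨⟨hS.1 hx, hS.1 hy⟩, hxy⟩
      · rw [Finset.mem_image]
        exact ⟨z, by rw [Finset.mem_sdiff, Finset.mem_inter]; exact ⟨⟨hbad, hS.1 hz⟩,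
          by simp [hzx, hzy]⟩, rfl⟩
    · intro w hw
      simp only [Finset.mem_insert, Finset.mem_singleton] at hw
      rcases hw with rfl | rfl | rfl <;> assumption

end Stmt10

namespace Stmt10

attribute [local instance] Classical.propDecidable

def rank {s : ℕ} (i j : Fin s) : ℕ := ((finProdFinEquiv (i, j)) : Fin (s * s)).val

lemma rank_lt {s : ℕ} (i j : Fin s) : rank i j < s * s := (finProdFinEquiv (i, j)).isLt

lemma rank_inj {s : ℕ} {i j k l : Fin s} (h : rank i j = rank k l) : i = k ∧ j = l := by
  have h2 : (finProdFinEquiv ((i, j) : Fin s × Fin s)) = finProdFinEquiv (k, l) :=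
    Fin.ext h
  have h3 := finProdFinEquiv.injective h2
  exact ⟨congrArg Prod.fst h3, congrArg Prod.snd h3⟩

variable {V : Type} {G : SimpleGraph V}

lemma greedy {s ρ σ : ℕ} (v : Fin s → V)
    (Fam : ∀ i j : Fin s, Finset (G.Walk (v i) (v j)))
    (c : ℕ → ℕ)
    (hcard : ∀ i j : Fin s, i < j → (Fam i j).card = c (rank i j))
    (hcmono : ∀ m n : ℕ, m ≤ n → c n ≤ c m)
    (hcineq : ∀ n : ℕ, n < s * s →
      (s * s) * ((c (n + 1)).choose ρ * (σ - 1)) + (s * s) * ρ + s * ρ < c n)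
    (hz : ∀ i j : Fin s, i < j → ∀ m : Fin s, v m ≠ v i → v m ≠ v j →
      ((Fam i j).filter (fun P => ConflV P (v m))).card ≤ ρ)
    (hWin : ∀ i j k l : Fin s, i < j → k < l → (i, j) ≠ (k, l) →
      ∀ H : Finset (G.Walk (v i) (v j)), H ⊆ Fam i j →
      (∀ P' ∈ H, ρ ≤ ((Fam k l).filter (fun Q => ConflP Q P')).card) →
      ((Fam k l).card.choose ρ * (σ - 1) < H.card) →
      LinearInducedModel G (completeBipartiteGraph (Fin ρ) (Fin σ))) :
    LinearInducedModel G (completeBipartiteGraph (Fin ρ) (Fin σ)) ∨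
    ∃ ch : ∀ i j : Fin s, G.Walk (v i) (v j),
      ∀ i j : Fin s, i < j →
        ch i j ∈ Fam i j ∧
        (∀ m : Fin s, v m ≠ v i → v m ≠ v j → ¬ ConflV (ch i j) (v m)) ∧
        (∀ k l : Fin s, k < l → (k, l) ≠ (i, j) → ¬ ConflP (ch i j) (ch k l)) := by
  have hFamne : ∀ i j : Fin s, i < j → (Fam i j).Nonempty := by
    intro i j hij
    refine Finset.card_pos.1 ?_
    rw [hcard i j hij]
    have := hcineq (rank i j) (rank_lt i j)
    omega
  have hdef : ∀ i j : Fin s, Nonempty (G.Walk (v i) (v j)) := by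
    intro i j
    rcases lt_trichotomy i j with h | h | h
    · exact ⟨(hFamne i j h).choose⟩
    · exact ⟨(Walk.nil : G.Walk (v i) (v i)).copy rfl (congrArg v h)⟩
    · exact ⟨((hFamne j i h).choose).reverse⟩
  have main : ∀ n : ℕ,
      LinearInducedModel G (completeBipartiteGraph (Fin ρ) (Fin σ)) ∨
      ∃ ch : ∀ i j : Fin s, G.Walk (v i) (v j),
        ∀ i j : Fin s, i < j → rank i j < n →
          ch i j ∈ Fam i j ∧
          (∀ m : Fin s, v m ≠ v i → v m ≠ v j → ¬ ConflV (ch i j) (v m)) ∧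
          (∀ k l : Fin s, k < l → rank i j < rank k l →
            ((Fam k l).filter (fun Q => ConflP Q (ch i j))).card < ρ) ∧
          (∀ k l : Fin s, k < l → rank k l < rank i j → ¬ ConflP (ch i j) (ch k l)) := by
    intro n
    induction n with
    | zero =>
        right
        exact ⟨fun i j => Classical.choice (hdef i j), fun i j _ h => absurd h (by omega)⟩
    | succ n ih =>
        rcases ih with hm | ⟨ch, hch⟩
        · exact Or.inl hm
        by_cases hex : ∃ p : Fin s × Fin s, p.1 < p.2 ∧ rank p.1 p.2 = n
        · obtain ⟨⟨i0, j0⟩, hij0', hr0'⟩ := hex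
          have hij0 : i0 < j0 := hij0'
          have hr0 : rank i0 j0 = n := hr0'
          clear hij0' hr0'
          -- check whether a win is possible against some future pair
          by_cases hw : ∃ p : Fin s × Fin s, p.1 < p.2 ∧ n < rank p.1 p.2 ∧
              ((Fam p.1 p.2).card.choose ρ * (σ - 1) <
                ((Fam i0 j0).filter (fun P =>
                  ρ ≤ ((Fam p.1 p.2).filter (fun Q => ConflP Q P)).card)).card)
          · obtain ⟨p, hp1, hp2, hp3⟩ := hw
            left
            refine hWin i0 j0 p.1 p.2 hij0 hp1 ?_ _ (Finset.filter_subset _ _) ?_ hp3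
            · intro hc
              rw [Prod.mk.injEq] at hc
              rw [← hc.1, ← hc.2] at hp2
              omega
            · intro P' hP'
              exact (Finset.mem_filter.1 hP').2
          · push_neg at hw
            -- the three bad sets
            set bad1 := (Fam i0 j0).filter
              (fun P => ∃ m : Fin s, v m ≠ v i0 ∧ v m ≠ v j0 ∧ ConflV P (v m)) with hbad1
            set bad2 := (Fam i0 j0).filter
              (fun P => ∃ p : Fin s × Fin s, p.1 < p.2 ∧ rank p.1 p.2 < n ∧
                ConflP P (ch p.1 p.2)) with hbad2
            set bad3 := (Fam i0 j0).filter
              (fun P => ∃ p : Fin s × Fin s, p.1 < p.2 ∧ n < rank p.1 p.2 ∧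
                ρ ≤ ((Fam p.1 p.2).filter (fun Q => ConflP Q P)).card) with hbad3
            have hb1 : bad1.card ≤ s * ρ := by
              have hsub : bad1 ⊆ Finset.univ.biUnion (fun m : Fin s =>
                  (Fam i0 j0).filter (fun P => v m ≠ v i0 ∧ v m ≠ v j0 ∧ ConflV P (v m))) := by
                intro P hP
                rw [hbad1, Finset.mem_filter] at hP
                obtain ⟨m, hm⟩ := hP.2
                exact Finset.mem_biUnion.2 ⟨m, Finset.mem_univ m,
                  Finset.mem_filter.2 ⟨hP.1, hm⟩⟩
              calc bad1.card ≤ _ := Finset.card_le_card hsub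
                _ ≤ ∑ m : Fin s, ((Fam i0 j0).filter
                    (fun P => v m ≠ v i0 ∧ v m ≠ v j0 ∧ ConflV P (v m))).card :=
                  Finset.card_biUnion_le
                _ ≤ ∑ _m : Fin s, ρ := by
                    refine Finset.sum_le_sum fun m _ => ?_
                    by_cases hm : v m ≠ v i0 ∧ v m ≠ v j0
                    · refine le_trans (Finset.card_le_card ?_) (hz i0 j0 hij0 m hm.1 hm.2)
                      intro P hP
                      rw [Finset.mem_filter] at hP ⊢
                      exact ⟨hP.1, hP.2.2.2⟩
                    · have : (Fam i0 j0).filter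
                          (fun P => v m ≠ v i0 ∧ v m ≠ v j0 ∧ ConflV P (v m)) = ∅ := by
                        refine Finset.filter_false_of_mem fun P _ => ?_
                        intro hc
                        exact hm ⟨hc.1, hc.2.1⟩
                      rw [this]; simp
                _ = s * ρ := by rw [Finset.sum_const, Finset.card_univ, Fintype.card_fin,
                    smul_eq_mul]
            have hb2 : bad2.card ≤ (s * s) * ρ := by
              have hsub : bad2 ⊆ Finset.univ.biUnion (fun p : Fin s × Fin s =>
                  (Fam i0 j0).filter (fun P => p.1 < p.2 ∧ rank p.1 p.2 < n ∧
                    ConflP P (ch p.1 p.2))) := by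
                intro P hP
                rw [hbad2, Finset.mem_filter] at hP
                obtain ⟨p, hp⟩ := hP.2
                exact Finset.mem_biUnion.2 ⟨p, Finset.mem_univ p,
                  Finset.mem_filter.2 ⟨hP.1, hp⟩⟩
              calc bad2.card ≤ _ := Finset.card_le_card hsub
                _ ≤ ∑ p : Fin s × Fin s, ((Fam i0 j0).filter
                    (fun P => p.1 < p.2 ∧ rank p.1 p.2 < n ∧ ConflP P (ch p.1 p.2))).card :=
                  Finset.card_biUnion_le
                _ ≤ ∑ _p : Fin s × Fin s, ρ := by
                    refine Finset.sum_le_sum fun p _ => ?_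
                    by_cases hp : p.1 < p.2 ∧ rank p.1 p.2 < n
                    · have hinv := (hch p.1 p.2 hp.1 hp.2).2.2.1 i0 j0 hij0 (by omega)
                      refine le_trans (Finset.card_le_card ?_) (le_of_lt hinv)
                      intro Q hQ
                      rw [Finset.mem_filter] at hQ ⊢
                      exact ⟨hQ.1, hQ.2.2.2⟩
                    · have : (Fam i0 j0).filter (fun P => p.1 < p.2 ∧ rank p.1 p.2 < n ∧
                          ConflP P (ch p.1 p.2)) = ∅ := by
                        refine Finset.filter_false_of_mem fun P _ => ?_
                        intro hc
                        exact hp ⟨hc.1, hc.2.1⟩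
                      rw [this]; simp
                _ = (s * s) * ρ := by
                    rw [Finset.sum_const, Finset.card_univ, Fintype.card_prod,
                      Fintype.card_fin, smul_eq_mul]
            have hb3 : bad3.card ≤ (s * s) * ((c (n + 1)).choose ρ * (σ - 1)) := by
              have hsub : bad3 ⊆ Finset.univ.biUnion (fun p : Fin s × Fin s =>
                  (Fam i0 j0).filter (fun P => p.1 < p.2 ∧ n < rank p.1 p.2 ∧
                    ρ ≤ ((Fam p.1 p.2).filter (fun Q => ConflP Q P)).card)) := by
                intro P hP
                rw [hbad3, Finset.mem_filter] at hP
                obtain ⟨p, hp⟩ := hP.2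
                exact Finset.mem_biUnion.2 ⟨p, Finset.mem_univ p,
                  Finset.mem_filter.2 ⟨hP.1, hp⟩⟩
              calc bad3.card ≤ _ := Finset.card_le_card hsub
                _ ≤ ∑ p : Fin s × Fin s, ((Fam i0 j0).filter
                    (fun P => p.1 < p.2 ∧ n < rank p.1 p.2 ∧
                      ρ ≤ ((Fam p.1 p.2).filter (fun Q => ConflP Q P)).card)).card :=
                  Finset.card_biUnion_le
                _ ≤ ∑ _p : Fin s × Fin s, (c (n + 1)).choose ρ * (σ - 1) := by
                    refine Finset.sum_le_sum fun p _ => ?_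
                    by_cases hp : p.1 < p.2 ∧ n < rank p.1 p.2
                    · have h1 : ((Fam i0 j0).filter (fun P => p.1 < p.2 ∧ n < rank p.1 p.2 ∧
                          ρ ≤ ((Fam p.1 p.2).filter (fun Q => ConflP Q P)).card)).card ≤
                          ((Fam i0 j0).filter (fun P =>
                            ρ ≤ ((Fam p.1 p.2).filter (fun Q => ConflP Q P)).card)).card := by
                        refine Finset.card_le_card ?_
                        intro Q hQ
                        rw [Finset.mem_filter] at hQ ⊢
                        exact ⟨hQ.1, hQ.2.2.2⟩
                      have h2 := hw p hp.1 hp.2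
                      have h3 : (Fam p.1 p.2).card.choose ρ ≤ (c (n + 1)).choose ρ := by
                        rw [hcard p.1 p.2 hp.1]
                        exact Nat.choose_le_choose ρ (hcmono (n + 1) (rank p.1 p.2) hp.2)
                      calc _ ≤ _ := h1
                        _ ≤ (Fam p.1 p.2).card.choose ρ * (σ - 1) := h2
                        _ ≤ (c (n + 1)).choose ρ * (σ - 1) := Nat.mul_le_mul_right _ h3
                    · have : (Fam i0 j0).filter (fun P => p.1 < p.2 ∧ n < rank p.1 p.2 ∧
                          ρ ≤ ((Fam p.1 p.2).filter (fun Q => ConflP Q P)).card) = ∅ := by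
                        refine Finset.filter_false_of_mem fun P _ => ?_
                        intro hc
                        exact hp ⟨hc.1, hc.2.1⟩
                      rw [this]; simp
                _ = (s * s) * ((c (n + 1)).choose ρ * (σ - 1)) := by
                    rw [Finset.sum_const, Finset.card_univ, Fintype.card_prod,
                      Fintype.card_fin, smul_eq_mul]
            -- there is a good path
            have hnlt : n < s * s := hr0 ▸ rank_lt i0 j0
            have htot : (bad1 ∪ bad2 ∪ bad3).card < (Fam i0 j0).card := by
              have h1 := hcineq n hnlt
              have h2 : (bad1 ∪ bad2 ∪ bad3).card ≤ bad1.card + bad2.card + bad3.card :=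
                le_trans (Finset.card_union_le _ _)
                  (by have := Finset.card_union_le bad1 bad2; omega)
              rw [hcard i0 j0 hij0, hr0]
              omega
            have hP0 : ∃ P0 ∈ Fam i0 j0, P0 ∉ bad1 ∧ P0 ∉ bad2 ∧ P0 ∉ bad3 := by
              have hne : ((Fam i0 j0) \ (bad1 ∪ bad2 ∪ bad3)).Nonempty := by
                rw [← Finset.card_pos]
                have := Finset.le_card_sdiff (bad1 ∪ bad2 ∪ bad3) (Fam i0 j0)
                omega
              obtain ⟨P0, hP0⟩ := hne
              rw [Finset.mem_sdiff] at hP0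
              refine ⟨P0, hP0.1, ?_, ?_, ?_⟩ <;> intro hc <;> apply hP0.2
              · exact Finset.mem_union_left _ (Finset.mem_union_left _ hc)
              · exact Finset.mem_union_left _ (Finset.mem_union_right _ hc)
              · exact Finset.mem_union_right _ hc
            obtain ⟨P0, hP0mem, hP0b1, hP0b2, hP0b3⟩ := hP0
            right
            refine ⟨fun i j => if h : i = i0 ∧ j = j0 then
              P0.copy (congrArg v h.1.symm) (congrArg v h.2.symm) else ch i j, ?_⟩
            intro i j hij hrlt
            dsimp only
            by_cases hcase : i = i0 ∧ j = j0
            · obtain ⟨rfl, rfl⟩ := hcase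
              have heq : (if h : i = i ∧ j = j then
                  P0.copy (congrArg v h.1.symm) (congrArg v h.2.symm) else ch i j) = P0 := by
                rw [dif_pos ⟨rfl, rfl⟩]
                rfl
              simp only [heq]
              refine ⟨hP0mem, ?_, ?_, ?_⟩
              · intro m hm1 hm2 hc
                apply hP0b1
                rw [hbad1, Finset.mem_filter]
                exact ⟨hP0mem, m, hm1, hm2, hc⟩
              · intro k l hkl hrk
                by_contra hc
                push_neg at hc
                apply hP0b3
                rw [hbad3, Finset.mem_filter]
                exact ⟨hP0mem, (k, l), hkl, (show n < rank k l by omega), hc⟩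
              · intro k l hkl hrk
                have hne : ¬(k = i ∧ l = j) := by
                  rintro ⟨rfl, rfl⟩
                  exact lt_irrefl _ hrk
                rw [dif_neg hne]
                intro hc
                apply hP0b2
                rw [hbad2, Finset.mem_filter]
                exact ⟨hP0mem, (k, l), hkl, (show rank k l < n by omega), hc⟩
            · have hrne : rank i j ≠ n := by
                intro hc
                have := rank_inj (hc.trans hr0.symm)
                exact hcase this
              have hrlt' : rank i j < n := by omega
              simp only [dif_neg hcase]
              obtain ⟨o1, o2, o3, o4⟩ := hch i j hij hrlt'
              refine ⟨o1, o2, o3, ?_⟩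
              intro k l hkl hrk
              have hne : ¬(k = i0 ∧ l = j0) := by
                rintro ⟨rfl, rfl⟩
                omega
              rw [dif_neg hne]
              exact o4 k l hkl hrk
        · right
          refine ⟨ch, fun i j hij hrlt => ?_⟩
          have : rank i j ≠ n := fun hc => hex ⟨(i, j), hij, hc⟩
          exact hch i j hij (by omega)
  rcases main (s * s) with hm | ⟨ch, hch⟩
  · exact Or.inl hm
  right
  refine ⟨ch, fun i j hij => ?_⟩
  obtain ⟨o1, o2, o3, o4⟩ := hch i j hij (rank_lt i j)
  refine ⟨o1, o2, ?_⟩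
  intro k l hkl hne
  rcases lt_trichotomy (rank k l) (rank i j) with h | h | h
  · exact o4 k l hkl h
  · obtain ⟨rfl, rfl⟩ := rank_inj h
    exact absurd rfl hne
  · intro hc
    obtain ⟨o1', o2', o3', o4'⟩ := hch k l hkl (rank_lt k l)
    exact o4' i j hij h (conflP_symm hc)
end Stmt10

namespace Stmt10

attribute [local instance] Classical.propDecidable

def qaux (s ρ σ : ℕ) : ℕ → ℕ
  | 0 => 1
  | n + 1 => (s * s) * ((qaux s ρ σ n).choose ρ * (σ - 1)) + (s * s) * ρ + s * ρ + 1
      + qaux s ρ σ n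

lemma qaux_succ (s ρ σ n : ℕ) : qaux s ρ σ (n + 1)
    = (s * s) * ((qaux s ρ σ n).choose ρ * (σ - 1)) + (s * s) * ρ + s * ρ + 1
      + qaux s ρ σ n := rfl

lemma qaux_pos (s ρ σ n : ℕ) : 0 < qaux s ρ σ n := by
  cases n with
  | zero => exact Nat.one_pos
  | succ n => rw [qaux_succ]; omega

lemma qaux_mono (s ρ σ : ℕ) : Monotone (qaux s ρ σ) :=
  monotone_nat_of_le_succ (fun n => by rw [qaux_succ]; omega)

end Stmt10

open Stmt10 in
theorem stmt10 (s ρ σ : ℕ) :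
    ∃ f g : ℕ, 0 < f ∧ 0 < g ∧
      ∀ (V : Type) [Fintype V] (G : SimpleGraph V) (B : Finset V)
        (𝒬 : ∀ x y : V, Set (G.Walk x y)),
        f ≤ B.card →
        (∀ a ∈ B, ∀ b ∈ B, a ≠ b → ¬ G.Adj a b) →
        (∀ x ∈ B, ∀ y ∈ B, x ≠ y →
          g ≤ (𝒬 x y).ncard ∧ (∀ P ∈ 𝒬 x y, IsInducedPathW G P)) →
        (∀ x ∈ B, ∀ y ∈ B, x ≠ y → ∀ P ∈ 𝒬 x y, ∀ Q ∈ 𝒬 x y, P ≠ Q →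
          ∀ u ∈ interiorW P, ∀ w ∈ interiorW Q, u ≠ w ∧ ¬ G.Adj u w) →
        (∀ x ∈ B, ∀ y ∈ B, ∀ x' ∈ B, ∀ y' ∈ B, x ≠ y → x' ≠ y' →
          ({x, y} : Set V) ≠ {x', y'} →
          ∀ P ∈ 𝒬 x y, ∀ P' ∈ 𝒬 x' y',
            ∀ u ∈ interiorW P, u ∉ interiorW P') →
        InducedProperSubdivisionK G s ∨
          LinearInducedModel G (completeBipartiteGraph (Fin ρ) (Fin σ)) := by
  classical
  set N := s * s with hN
  set g := qaux s ρ σ N with hg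
  set h := g.choose ρ * (σ - 1) + 1 with hh
  set f := (h + 1) * (s + 1) ^ 6 with hf
  refine ⟨f, g, by positivity, qaux_pos s ρ σ N, ?_⟩
  intro V _ G B 𝒬 hfB hstab h𝒬 hanti hdisj
  letI : LinearOrder V := LinearOrder.lift' (Fintype.equivFin V) (Equiv.injective _)
  -- canonical families
  have hexF : ∀ x y : V, x ∈ B → y ∈ B → x ≠ y →
      ∃ F : Finset (G.Walk x y), ↑F ⊆ 𝒬 x y ∧ F.card = g := by
    intro x y hx hy hne
    obtain ⟨t, ht, htc⟩ := Set.exists_subset_card_eq (h𝒬 x hx y hy hne).1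
    have hfin : t.Finite := Set.finite_of_ncard_ne_zero
      (by rw [htc]; have := qaux_pos s ρ σ N; omega)
    refine ⟨hfin.toFinset, by rwa [Set.Finite.coe_toFinset], ?_⟩
    rw [← htc, Set.ncard_eq_toFinset_card t hfin]
  choose! Fm hFm1 hFm2 using hexF
  -- heavy vertices of a pair
  set Bad : V → V → Finset V := fun x y => B.filter
    (fun z => z ≠ x ∧ z ≠ y ∧ ρ + 1 ≤ ((Fm x y).filter (fun P => ConflV P z)).card)
    with hBadDef
  by_cases hW1 : ∃ x y : V, x ∈ B ∧ y ∈ B ∧ x < y ∧ g.choose ρ * (σ - 1) < (Bad x y).card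
  · -- heavy-vertex win
    obtain ⟨x, y, hx, hy, hxy, hcardB⟩ := hW1
    right
    have hne := ne_of_lt hxy
    refine win1 hne (hstab x hx y hy hne) (Fm x y)
      (fun P hP => (h𝒬 x hx y hy hne).2 P (hFm1 x y hx hy hne hP))
      (fun P hP Q hQ hPQ => hanti x hx y hy hne P (hFm1 x y hx hy hne hP)
        Q (hFm1 x y hx hy hne hQ) hPQ)
      (Bad x y) ?_ ?_ ?_ ?_
    · intro z hz
      rw [hBadDef, Finset.mem_filter] at hz
      exact ⟨hz.2.1, hz.2.2.1⟩
    · intro a ha b hb hab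
      rw [hBadDef, Finset.mem_filter] at ha hb
      exact hstab a ha.1 b hb.1 hab
    · intro z hz
      rw [hBadDef, Finset.mem_filter] at hz
      exact hz.2.2.2
    · rwa [hFm2 x y hx hy hne]
  · push_neg at hW1
    have hBadcard : ∀ x ∈ B, ∀ y ∈ B, x < y → (Bad x y).card < h := by
      intro x hx y hy hxy
      have := hW1 x y hx hy hxy
      omega
    obtain ⟨S, hSB, hScard, hSgood⟩ := select_S B s h (by omega) Bad hBadcard hfB
    -- the vertices
    set vf : Fin s → V := fun i => (S.orderIsoOfFin hScard i : V) with hvf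
    have hvmono : StrictMono vf := by
      intro i j hij
      exact (Subtype.coe_lt_coe).2 ((S.orderIsoOfFin hScard).strictMono hij)
    have hvinj : Function.Injective vf := hvmono.injective
    have hvS : ∀ i, vf i ∈ S := fun i => (S.orderIsoOfFin hScard i).2
    have hvB : ∀ i, vf i ∈ B := fun i => hSB (hvS i)
    have hvne : ∀ i j : Fin s, i ≠ j → vf i ≠ vf j := fun i j hij => fun hc => hij (hvinj hc)
    -- the trimmed families
    set cfun : ℕ → ℕ := fun n => qaux s ρ σ (N - n) with hcfun
    have hexFam : ∀ i j : Fin s, i < j →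
        ∃ F ⊆ Fm (vf i) (vf j), F.card = cfun (rank i j) := by
      intro i j hij
      refine Finset.exists_subset_card_eq ?_
      rw [hFm2 _ _ (hvB i) (hvB j) (hvne i j (ne_of_lt hij))]
      exact qaux_mono s ρ σ (Nat.sub_le N (rank i j))
    choose! Fam hFam1 hFam2 using hexFam
    have hFam𝒬 : ∀ i j : Fin s, i < j → ∀ P ∈ Fam i j, P ∈ 𝒬 (vf i) (vf j) := by
      intro i j hij P hP
      exact hFm1 _ _ (hvB i) (hvB j) (hvne i j (ne_of_lt hij)) (hFam1 i j hij hP)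
    -- set-distinctness of pairs
    have hsetne : ∀ i j k l : Fin s, i < j → k < l → (i, j) ≠ (k, l) →
        ({vf i, vf j} : Set V) ≠ {vf k, vf l} := by
      intro i j k l hij hkl hne heq
      have hi : vf i = vf k ∨ vf i = vf l := by
        have : vf i ∈ ({vf k, vf l} : Set V) := heq ▸ (Set.mem_insert _ _)
        simpa using this
      have hj : vf j = vf k ∨ vf j = vf l := by
        have : vf j ∈ ({vf k, vf l} : Set V) := heq ▸
          (Set.mem_insert_of_mem _ (Set.mem_singleton _))
        simpa using this
      rcases hi with hi | hi <;> rcases hj with hj | hj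
      · exact (ne_of_lt hij) ((hvinj hi).trans (hvinj hj).symm)
      · exact hne (by rw [Prod.mk.injEq]; exact ⟨hvinj hi, hvinj hj⟩)
      · have h1 : i = l := hvinj hi
        have h2 : j = k := hvinj hj
        subst h1; subst h2
        exact absurd (hij.trans hkl) (lt_irrefl _)
      · exact (ne_of_lt hij) ((hvinj hi).trans (hvinj hj).symm)
    -- nonadjacency inside B
    have hnadjv : ∀ i j : Fin s, i ≠ j → ¬ G.Adj (vf i) (vf j) :=
      fun i j hij => hstab _ (hvB i) _ (hvB j) (hvne i j hij)
    -- within-pair anticomplete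
    have hantiF : ∀ i j : Fin s, i < j → ∀ P ∈ Fam i j, ∀ Q ∈ Fam i j, P ≠ Q →
        ∀ u ∈ interiorW P, ∀ w ∈ interiorW Q, u ≠ w ∧ ¬ G.Adj u w := by
      intro i j hij P hP Q hQ hPQ
      exact hanti _ (hvB i) _ (hvB j) (hvne i j (ne_of_lt hij)) P (hFam𝒬 i j hij P hP)
        Q (hFam𝒬 i j hij Q hQ) hPQ
    -- cross-pair interiors disjoint
    have hcrossF : ∀ i j k l : Fin s, i < j → k < l → (i, j) ≠ (k, l) →
        ∀ P ∈ Fam i j, ∀ P' ∈ Fam k l, ∀ u ∈ interiorW P, u ∉ interiorW P' := by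
      intro i j k l hij hkl hne P hP P' hP'
      exact hdisj _ (hvB i) _ (hvB j) _ (hvB k) _ (hvB l)
        (hvne i j (ne_of_lt hij)) (hvne k l (ne_of_lt hkl))
        (hsetne i j k l hij hkl hne) P (hFam𝒬 i j hij P hP) P' (hFam𝒬 k l hkl P' hP')
    -- apply greedy
    have hcmono : ∀ m n : ℕ, m ≤ n → cfun n ≤ cfun m :=
      fun m n hmn => qaux_mono s ρ σ (Nat.sub_le_sub_left hmn N)
    have hcineq : ∀ n : ℕ, n < N →
        N * ((cfun (n + 1)).choose ρ * (σ - 1)) + N * ρ + s * ρ < cfun n := by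
      intro n hn
      have e : N - n = (N - (n + 1)) + 1 := by omega
      have e2 : cfun n = (s * s) * ((cfun (n + 1)).choose ρ * (σ - 1)) + (s * s) * ρ
          + s * ρ + 1 + cfun (n + 1) := by
        rw [hcfun]
        simp only
        rw [e, qaux_succ]
      rw [e2, ← hN]
      omega
    have hzF : ∀ i j : Fin s, i < j → ∀ m : Fin s, vf m ≠ vf i → vf m ≠ vf j →
        ((Fam i j).filter (fun P => ConflV P (vf m))).card ≤ ρ := by
      intro i j hij m hm1 hm2
      have hnotbad : vf m ∉ Bad (vf i) (vf j) :=
        hSgood _ (hvS i) _ (hvS j) _ (hvS m) (hvmono hij) hm1 hm2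
      rw [hBadDef, Finset.mem_filter] at hnotbad
      push_neg at hnotbad
      have hcount := hnotbad (hvB m) hm1 hm2
      have hsub : (Fam i j).filter (fun P => ConflV P (vf m)) ⊆
          (Fm (vf i) (vf j)).filter (fun P => ConflV P (vf m)) :=
        Finset.filter_subset_filter _ (hFam1 i j hij)
      have := Finset.card_le_card hsub
      omega
    have hWinF : ∀ i j k l : Fin s, i < j → k < l → (i, j) ≠ (k, l) →
        ∀ H : Finset (G.Walk (vf i) (vf j)), H ⊆ Fam i j →
        (∀ P' ∈ H, ρ ≤ ((Fam k l).filter (fun Q => ConflP Q P')).card) →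
        ((Fam k l).card.choose ρ * (σ - 1) < H.card) →
        LinearInducedModel G (completeBipartiteGraph (Fin ρ) (Fin σ)) := by
      intro i j k l hij hkl hne H hHsub hheavy hcard
      refine win2 (hvne k l (ne_of_lt hkl)) (hnadjv k l (ne_of_lt hkl))
        (hvne i j (ne_of_lt hij)) (hnadjv i j (ne_of_lt hij))
        (Fam k l) (Fam i j)
        (fun P hP => (h𝒬 _ (hvB k) _ (hvB l) (hvne k l (ne_of_lt hkl))).2 P
          (hFam𝒬 k l hkl P hP))
        (fun P hP => (h𝒬 _ (hvB i) _ (hvB j) (hvne i j (ne_of_lt hij))).2 P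
          (hFam𝒬 i j hij P hP))
        (hantiF k l hkl) (hantiF i j hij)
        ?_ H hHsub hheavy hcard
      · intro P hP P' hP'
        exact hcrossF k l i j hkl hij (fun hc => hne (by
          rw [Prod.mk.injEq] at hc ⊢
          exact ⟨hc.1.symm, hc.2.symm⟩)) P hP P' hP'
    rcases greedy vf Fam cfun (fun i j hij => hFam2 i j hij) hcmono
      (fun n hn => hcineq n hn) hzF hWinF with hm | ⟨ch, hch⟩
    · exact Or.inr hm
    -- build the subdivision
    left
    refine ⟨vf, fun i j => if hlt : i < j then ch i j else
      (if hgt : j < i then (ch j i).reverse else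
        (Walk.nil : G.Walk (vf i) (vf i)).copy rfl
          (congrArg vf (le_antisymm (not_lt.1 hgt) (not_lt.1 hlt)))),
      hvinj, hnadjv, ?_, ?_, ?_⟩
    · intro i j hij
      simp only [dif_pos hij]
      have hmem := (hch i j hij).1
      have hind := (h𝒬 _ (hvB i) _ (hvB j) (hvne i j (ne_of_lt hij))).2 _
        (hFam𝒬 i j hij _ hmem)
      exact ⟨hind, (interior_facts _ hind (hvne i j (ne_of_lt hij))
        (hnadjv i j (ne_of_lt hij))).2⟩
    · intro i j k l hij hkl hne x hx y hy
      simp only [dif_pos hij] at hx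
      simp only [dif_pos hkl] at hy
      constructor
      · intro hc
        exact hcrossF i j k l hij hkl hne _ (hch i j hij).1 _ (hch k l hkl).1 x hx (hc ▸ hy)
      · intro hc
        exact (hch i j hij).2.2 k l hkl (fun hc2 => hne (by
          rw [Prod.mk.injEq] at hc2 ⊢
          exact ⟨hc2.1.symm, hc2.2.symm⟩)) ⟨x, hx, y, hy, hc⟩
    · intro i j k hij hki hkj x hx
      simp only [dif_pos hij] at hx
      have hnc := (hch i j hij).2.1 k (fun hc => hki (hvinj hc)) (fun hc => hkj (hvinj hc))
      constructor
      · intro hc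
        exact hnc (Or.inl (hc ▸ hx))
      · intro hc
        exact hnc (Or.inr ⟨x, hx, hc.symm⟩)
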